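/- arXiv:2501.17448 — 2 statements merged into one kernel-verified Lean document; each statement's English description precedes it below -/
import Mathlib

section
/- The rational orthogonal group O(n,ℚ), consisting of all real orthogonal n×n matrices whose entries are rational numbers, is a dense subset of the real orthogonal group O(n,ℝ). -/
open scoped Matrix
open Matrix Filter

section Auxiliary

variable {n : ℕ}

namespace RationalOrthogonalDense

/-- Affinity of the determinant in one diagonal entry. -/
lemma det_affine (M : Matrix (Fin n) (Fin n) ℝ) (d : Fin n → ℝ) (i : Fin n) (t : ℝ) :
    (M + diagonal (Function.update d i t)).det =
      (M + diagonal (Function.update d i 0)).det +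
        t * ((M + diagonal (Function.update d i 1)).det
              - (M + diagonal (Function.update d i 0)).det) := by
  set N := M + diagonal (Function.update d i 0) with hN
  have key : ∀ s : ℝ, M + diagonal (Function.update d i s) =
      N.updateCol i ((fun k => N k i) + s • (Pi.single i 1 : Fin n → ℝ)) := by
    intro s
    ext k l
    rcases eq_or_ne l i with hl | hl
    · subst hl
      rcases eq_or_ne k l with hk | hk
      · subst hk
        simp [N, Matrix.updateCol_apply, Matrix.diagonal_apply, Function.update_apply,
          Pi.single_apply]
      · simp [N, Matrix.updateCol_apply, Matrix.diagonal_apply, Function.update_apply,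
          Pi.single_apply, hk]
    · simp [N, Matrix.updateCol_apply, Matrix.diagonal_apply, Function.update_apply,
        Pi.single_apply, hl, Ne.symm hl]
      split_ifs with h1 h2 <;> simp_all
  have hdet : ∀ s : ℝ, (M + diagonal (Function.update d i s)).det =
      N.det + s * (N.updateCol i (Pi.single i 1 : Fin n → ℝ)).det := by
    intro s
    rw [key s, Matrix.det_updateCol_add, Matrix.det_updateCol_smul,
      Matrix.updateCol_eq_self]
  rw [hdet t, hdet 1, hdet 0]
  ring

/-- One step: one diagonal coordinate can be moved into `{1, -1}` keeping the
determinant nonzero. -/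
lemma sign_step (M : Matrix (Fin n) (Fin n) ℝ) (i : Fin n) (d : Fin n → ℝ)
    (h : (M + diagonal d).det ≠ 0) :
    ∃ ε : ℝ, (ε = 1 ∨ ε = -1) ∧ (M + diagonal (Function.update d i ε)).det ≠ 0 := by
  by_contra hc
  push_neg at hc
  have h1 := hc 1 (Or.inl rfl)
  have hm := hc (-1) (Or.inr rfl)
  rw [det_affine] at h1 hm
  have hd : (M + diagonal d).det ≠ 0 := h
  rw [show d = Function.update d i (d i) from (Function.update_eq_self i d).symm, det_affine] at hd
  set a := (M + diagonal (Function.update d i 0)).det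
  set b := (M + diagonal (Function.update d i 1)).det
  have : a = 0 ∧ b - a = 0 := by constructor <;> linarith
  obtain ⟨ha, hb⟩ := this
  exact hd (by rw [hb, ha]; ring)

/-- For any real matrix `M` there is a `±1` diagonal matrix `D` with
`det (M + D) ≠ 0`. -/
lemma exists_sign (M : Matrix (Fin n) (Fin n) ℝ) :
    ∃ d : Fin n → ℝ, (∀ i, d i = 1 ∨ d i = -1) ∧ (M + diagonal d).det ≠ 0 := by
  have base : ∃ t : ℝ, (M + diagonal (fun _ => t)).det ≠ 0 := by
    have key : ∀ t : ℝ, ((-M).charpoly).eval t = (M + diagonal (fun _ => t)).det := by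
      intro t
      rw [Matrix.charpoly, eval_det, Matrix.matPolyEquiv_charmatrix]
      rw [map_neg, sub_neg_eq_add]
      rw [Polynomial.eval_add, Polynomial.eval_X, Polynomial.eval_C]
      rw [Matrix.scalar_apply]
      rw [add_comm]
    have hne : (-M).charpoly ≠ 0 := ((-M).charpoly_monic).ne_zero
    obtain ⟨t, ht⟩ := (Polynomial.finite_setOf_isRoot hne).infinite_compl.nonempty
    exact ⟨t, by rw [← key]; exact ht⟩
  obtain ⟨t, ht⟩ := base
  have main : ∀ s : Finset (Fin n), ∀ d : Fin n → ℝ, (M + diagonal d).det ≠ 0 →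
      ∃ d' : Fin n → ℝ, (∀ i ∈ s, d' i = 1 ∨ d' i = -1) ∧ (∀ i ∉ s, d' i = d i) ∧
        (M + diagonal d').det ≠ 0 := by
    intro s
    induction s using Finset.induction_on with
    | empty => exact fun d hd => ⟨d, by simp, fun _ _ => rfl, hd⟩
    | @insert i s his ih =>
      intro d hd
      obtain ⟨ε, hε, hdet⟩ := sign_step M i d hd
      obtain ⟨d', h1, h2, h3⟩ := ih (Function.update d i ε) hdet
      refine ⟨d', ?_, ?_, h3⟩
      · intro j hj
        rcases Finset.mem_insert.mp hj with hj | hj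
        · subst hj
          rw [h2 j his, Function.update_self]; exact hε
        · exact h1 j hj
      · intro j hj
        rw [Finset.mem_insert, not_or] at hj
        rw [h2 j hj.2, Function.update_of_ne hj.1]
  obtain ⟨d', h1, _, h3⟩ := main Finset.univ (fun _ => t) ht
  exact ⟨d', fun i => h1 i (Finset.mem_univ i), h3⟩

/-- `1 + B` is invertible for a skew-symmetric matrix `B`. -/
lemma skew_det_ne' {K : Type*} [Field K] [LinearOrder K] [IsStrictOrderedRing K] (B : Matrix (Fin n) (Fin n) K)
    (hB : Bᵀ = -B) : (1 + B).det ≠ 0 := by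
  intro h
  obtain ⟨v, hv, hv0⟩ := (Matrix.exists_mulVec_eq_zero_iff).mpr h
  have h1 : v ⬝ᵥ ((1 + B) *ᵥ v) = 0 := by rw [hv0, dotProduct_zero]
  have h2 : v ⬝ᵥ (B *ᵥ v) = 0 := by
    have e : v ⬝ᵥ (B *ᵥ v) = (Bᵀ *ᵥ v) ⬝ᵥ v := by
      rw [Matrix.dotProduct_mulVec, Matrix.mulVec_transpose]
    rw [hB, Matrix.neg_mulVec, neg_dotProduct, dotProduct_comm] at e
    have e2 : v ⬝ᵥ (B *ᵥ v) = (B *ᵥ v) ⬝ᵥ v := dotProduct_comm _ _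
    linarith
  rw [Matrix.add_mulVec, Matrix.one_mulVec, dotProduct_add, h2, add_zero] at h1
  exact hv (dotProduct_self_eq_zero.mp h1)

/-- The Cayley transform of a real skew-symmetric matrix is orthogonal. -/
lemma cayley_orth (B : Matrix (Fin n) (Fin n) ℝ) (hB : Bᵀ = -B) :
    ((1 - B) * (1 + B)⁻¹)ᵀ * ((1 - B) * (1 + B)⁻¹) = 1 := by
  have h1 : IsUnit (1 + B).det := isUnit_iff_ne_zero.mpr (skew_det_ne' B hB)
  have h2' : (-B)ᵀ = -(-B) := by rw [transpose_neg, hB, neg_neg]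
  have h2 : IsUnit (1 - B).det := by
    have := skew_det_ne' (-B) h2'
    rw [← sub_eq_add_neg] at this
    exact isUnit_iff_ne_zero.mpr this
  have ht1 : (1 + B)ᵀ = 1 - B := by rw [transpose_add, transpose_one, hB, ← sub_eq_add_neg]
  have ht2 : (1 - B)ᵀ = 1 + B := by rw [transpose_sub, transpose_one, hB, sub_neg_eq_add]
  have comm : (1 + B) * (1 - B) = (1 - B) * (1 + B) := by noncomm_ring
  rw [transpose_mul, transpose_nonsing_inv, ht1, ht2]
  rw [mul_assoc, ← mul_assoc (1 + B), comm, mul_assoc, Matrix.mul_nonsing_inv _ h1, mul_one,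
    Matrix.nonsing_inv_mul _ h2]

/-- The entrywise rational-to-real map commutes with matrix inversion. -/
lemma map_inv_comm (C : Matrix (Fin n) (Fin n) ℚ) (h : C.det ≠ 0) :
    (C.map ((↑) : ℚ → ℝ))⁻¹ = (C⁻¹).map ((↑) : ℚ → ℝ) := by
  have hu : IsUnit C.det := isUnit_iff_ne_zero.mpr h
  have hinv : C⁻¹ * C = 1 := Matrix.nonsing_inv_mul _ hu
  have := congrArg ((Rat.castHom ℝ).mapMatrix) hinv
  rw [_root_.map_mul, _root_.map_one, RingHom.mapMatrix_apply, RingHom.mapMatrix_apply] at this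
  exact Matrix.inv_eq_left_inv this

lemma map_mul_rat (M N : Matrix (Fin n) (Fin n) ℚ) :
    (M * N).map ((↑) : ℚ → ℝ) = M.map ((↑) : ℚ → ℝ) * N.map ((↑) : ℚ → ℝ) := by
  rw [show ((↑) : ℚ → ℝ) = ⇑(Rat.castHom ℝ) from rfl]
  exact Matrix.map_mul

end RationalOrthogonalDense

end Auxiliary

open RationalOrthogonalDense

/-- **Density of the rational orthogonal group.**
The rational orthogonal group `O(n,ℚ)`, i.e. the set of real orthogonal `n×n` matrices all of
whose entries are rational, is dense in the real orthogonal group `O(n,ℝ)` (with the topology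
induced from the space of `n×n` real matrices). -/
theorem rational_orthogonal_dense (n : ℕ) :
    {U : Matrix (Fin n) (Fin n) ℝ | Uᵀ * U = 1} ⊆
      closure {U : Matrix (Fin n) (Fin n) ℝ | Uᵀ * U = 1 ∧ ∀ i j, ∃ q : ℚ, U i j = (q : ℝ)} := by
  intro U hU
  simp only [Set.mem_setOf_eq] at hU
  classical
  obtain ⟨d, hd1, hd2⟩ := exists_sign U
  set D : Matrix (Fin n) (Fin n) ℝ := diagonal d with hD
  have hdd : ∀ i, d i * d i = 1 := fun i => by rcases hd1 i with h | h <;> rw [h] <;> norm_num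
  have hDD : D * D = 1 := by
    rw [hD, diagonal_mul_diagonal]
    rw [show (fun i => d i * d i) = fun _ => (1:ℝ) from funext hdd]
    exact diagonal_one
  have hDT : Dᵀ = D := diagonal_transpose d
  obtain ⟨W, hWdef⟩ : ∃ W, W = D * U := ⟨_, rfl⟩
  have hW : Wᵀ * W = 1 := by
    rw [hWdef, transpose_mul, hDT, mul_assoc, ← mul_assoc D, hDD, one_mul, hU]
  have hdetW : (1 + W).det ≠ 0 := by
    have e : (1 : Matrix (Fin n) (Fin n) ℝ) + W = D * (U + D) := by
      rw [hWdef, mul_add, hDD, add_comm]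
    rw [e, det_mul]
    have hDdet : D.det ≠ 0 := by
      rw [hD, det_diagonal]
      exact Finset.prod_ne_zero_iff.mpr fun i _ => by rcases hd1 i with h | h <;> rw [h] <;> norm_num
    exact mul_ne_zero hDdet hd2
  have hdetWu : IsUnit (1 + W).det := isUnit_iff_ne_zero.mpr hdetW
  obtain ⟨A, hA⟩ : ∃ A, A = (1 - W) * (1 + W)⁻¹ := ⟨_, rfl⟩
  have ht : (1 + W)ᵀ = 1 + Wᵀ := by rw [transpose_add, transpose_one]
  have hdetWT : IsUnit (1 + Wᵀ).det := by rw [← ht, det_transpose]; exact hdetWu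
  have hAT : Aᵀ = -A := by
    have e1 : (1 + Wᵀ) * Aᵀ = 1 - Wᵀ := by
      rw [hA, transpose_mul, transpose_nonsing_inv, ht, transpose_sub, transpose_one, ← mul_assoc,
        Matrix.mul_nonsing_inv _ hdetWT, one_mul]
    have c2 : (1 - Wᵀ) * (1 + W) = W - Wᵀ := by
      have e : (1 - Wᵀ) * (1 + W) = 1 + W - (Wᵀ + Wᵀ * W) := by noncomm_ring
      rw [e, hW]
      abel
    have e2 : (1 + Wᵀ) * (-A) = 1 - Wᵀ := by
      have c1 : (1 + Wᵀ) * (1 - W) = Wᵀ - W := by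
        have e : (1 + Wᵀ) * (1 - W) = 1 - W + (Wᵀ - Wᵀ * W) := by noncomm_ring
        rw [e, hW]
        abel
      calc (1 + Wᵀ) * (-A) = -((1 + Wᵀ) * (1 - W)) * (1 + W)⁻¹ := by
            rw [hA, mul_neg, ← mul_assoc, neg_mul]
        _ = (W - Wᵀ) * (1 + W)⁻¹ := by rw [c1, neg_sub]
        _ = (1 - Wᵀ) * ((1 + W) * (1 + W)⁻¹) := by rw [← mul_assoc, c2]
        _ = 1 - Wᵀ := by rw [Matrix.mul_nonsing_inv _ hdetWu, mul_one]
    calc Aᵀ = (1 + Wᵀ)⁻¹ * ((1 + Wᵀ) * Aᵀ) := by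
          rw [← mul_assoc, Matrix.nonsing_inv_mul _ hdetWT, one_mul]
      _ = (1 + Wᵀ)⁻¹ * ((1 + Wᵀ) * (-A)) := by rw [e1, e2]
      _ = -A := by rw [← mul_assoc, Matrix.nonsing_inv_mul _ hdetWT, one_mul]
  have hA1 : (1 + A) * ((2:ℝ)⁻¹ • (1 + W)) = 1 := by
    have e : (1 + A) * (1 + W) = (2:ℝ) • (1 : Matrix (Fin n) (Fin n) ℝ) := by
      rw [add_mul, one_mul, hA, mul_assoc, Matrix.nonsing_inv_mul _ hdetWu, mul_one, two_smul]
      abel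
    rw [mul_smul_comm, e, smul_smul]
    norm_num
  have hdetA : IsUnit (1 + A).det := by
    have := congrArg det hA1
    rw [det_mul, det_one] at this
    exact IsUnit.of_mul_eq_one _ this
  have hAinv : (1 + A)⁻¹ = (2:ℝ)⁻¹ • (1 + W) := Matrix.inv_eq_right_inv hA1
  have hgA : D * ((1 - A) * (1 + A)⁻¹) = U := by
    have h1A : (1 - A) * (1 + W) = (2:ℝ) • W := by
      rw [sub_mul, one_mul, hA, mul_assoc, Matrix.nonsing_inv_mul _ hdetWu, mul_one, two_smul]
      abel
    rw [hAinv, mul_smul_comm, h1A, smul_smul]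
    norm_num
    rw [hWdef, ← mul_assoc, hDD, one_mul]
  set g : Matrix (Fin n) (Fin n) ℝ → Matrix (Fin n) (Fin n) ℝ :=
    fun X => D * ((1 - X) * (1 + X)⁻¹) with hg
  have hgc : ContinuousAt g A := by
    have hadd : ContinuousAt (fun X : Matrix (Fin n) (Fin n) ℝ => 1 + X) A :=
      (continuous_const.add continuous_id).continuousAt
    have hinv : ContinuousAt Inv.inv ((1 : Matrix (Fin n) (Fin n) ℝ) + A) := by
      apply continuousAt_matrix_inv
      rw [Ring.inverse_eq_inv']
      exact continuousAt_inv₀ hdetA.ne_zero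
    exact continuousAt_const.mul
      (((continuous_const.sub continuous_id).continuousAt).mul (hinv.comp hadd))
  -- rational approximations
  have hseq : ∀ k : ℕ, ∃ C : Matrix (Fin n) (Fin n) ℚ,
      ∀ i j, |A i j - ((C i j : ℚ) : ℝ)| < 1 / (k + 1) := by
    intro k
    have h : ∀ i j, ∃ q : ℚ, |A i j - (q : ℝ)| < 1 / (k + 1) := fun i j =>
      exists_rat_near _ (by positivity)
    choose C hC using h
    exact ⟨Matrix.of C, hC⟩
  choose C hC using hseq
  set Bq : ℕ → Matrix (Fin n) (Fin n) ℚ := fun k => (2:ℚ)⁻¹ • (C k - (C k)ᵀ) with hBq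
  have hBqskew : ∀ k, (Bq k)ᵀ = -(Bq k) := by
    intro k
    rw [hBq]
    ext i j
    simp [Matrix.transpose_apply]
    ring
  set B : ℕ → Matrix (Fin n) (Fin n) ℝ := fun k => (Bq k).map ((↑) : ℚ → ℝ) with hB
  have hBskew : ∀ k, (B k)ᵀ = -(B k) := by
    intro k
    ext i j
    simp [hB, Matrix.transpose_apply]
    have := congrFun (congrFun (hBqskew k) i) j
    simp [Matrix.transpose_apply] at this
    exact_mod_cast congrArg (fun q : ℚ => (q : ℝ)) this
  -- B tends to A
  have htendB : Tendsto B atTop (nhds A) := by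
    refine tendsto_pi_nhds.mpr ?_
    intro i
    rw [tendsto_pi_nhds]
    intro j
    rw [tendsto_iff_dist_tendsto_zero]
    apply squeeze_zero (fun k => dist_nonneg)
      (g := fun k : ℕ => (1:ℝ) / (k + 1))
    · intro k
      have e : B k i j = (((C k i j : ℚ) : ℝ) - ((C k j i : ℚ) : ℝ)) / 2 := by
        simp [hB, hBq]
        ring
      have hji : A j i = -A i j := by
        have h' := congrFun (congrFun hAT j) i
        simp [Matrix.transpose_apply] at h'
        linarith
      rw [Real.dist_eq, e]
      calc |(((C k i j : ℚ) : ℝ) - ((C k j i : ℚ) : ℝ)) / 2 - A i j|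
          = |((((C k i j : ℚ) : ℝ) - A i j) - (((C k j i : ℚ) : ℝ) - A j i)) / 2| := by
            rw [hji]; congr 1; ring
        _ ≤ (|((C k i j : ℚ) : ℝ) - A i j| + |((C k j i : ℚ) : ℝ) - A j i|) / 2 := by
            rw [abs_div]
            simp only [abs_two]
            apply div_le_div_of_nonneg_right ?_ (by norm_num)
            exact (abs_sub _ _)
        _ ≤ (1 / (k + 1) + 1 / (k + 1)) / 2 := by
            have h1 := hC k i j
            have h2 := hC k j i
            rw [abs_sub_comm] at h1 h2
            apply div_le_div_of_nonneg_right ?_ (by norm_num)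
            exact add_le_add h1.le h2.le
        _ = 1 / (k + 1) := by ring
    · exact tendsto_one_div_add_atTop_nhds_zero_nat
  -- membership
  have hmem : ∀ k, g (B k) ∈
      {U : Matrix (Fin n) (Fin n) ℝ | Uᵀ * U = 1 ∧ ∀ i j, ∃ q : ℚ, U i j = (q : ℝ)} := by
    intro k
    constructor
    · rw [hg]
      rw [transpose_mul, hDT, mul_assoc, ← mul_assoc D, hDD, one_mul]
      exact cayley_orth (B k) (hBskew k)
    · intro i j
      have hdetq : (1 + Bq k).det ≠ 0 := skew_det_ne' (Bq k) (hBqskew k)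
      have hmap1 : (1 : Matrix (Fin n) (Fin n) ℝ) + B k
          = ((1 + Bq k).map ((↑) : ℚ → ℝ)) := by
        ext a b
        by_cases hab : a = b <;> simp [hB, Matrix.one_apply, hab]
      have hmap2 : (1 : Matrix (Fin n) (Fin n) ℝ) - B k
          = ((1 - Bq k).map ((↑) : ℚ → ℝ)) := by
        ext a b
        by_cases hab : a = b <;> simp [hB, Matrix.one_apply, hab]
      have : g (B k) = (diagonal (fun i => if d i = 1 then (1:ℚ) else -1) *
          ((1 - Bq k) * (1 + Bq k)⁻¹)).map ((↑) : ℚ → ℝ) := by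
        show D * ((1 - B k) * (1 + B k)⁻¹) = _
        rw [hmap1, hmap2, map_inv_comm _ hdetq]
        conv_rhs => rw [map_mul_rat, map_mul_rat]
        congr 1
        rw [hD, Matrix.diagonal_map (by norm_num)]
        refine congrArg diagonal (funext fun i => ?_)
        rcases hd1 i with h | h <;> rw [h] <;> norm_num
      rw [this]
      refine ⟨((diagonal (fun i => if d i = 1 then (1:ℚ) else -1) *
          ((1 - Bq k) * (1 + Bq k)⁻¹)) i j), ?_⟩
      simp [Matrix.map_apply]
  have := hgc.tendsto.comp htendB
  rw [hg] at this
  rw [← hgA]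
  exact mem_closure_of_tendsto this (Filter.Eventually.of_forall hmem)
end

section
/- Let A be an n×n real expansive matrix. Suppose Ψ = {ψ¹, …, ψᴸ} ⊂ L²(ℝⁿ) is such that the wavelet system {D_{A^j} T_k ψ^l : j ∈ ℤ, k ∈ ℤⁿ, l = 1, …, L} is a Riesz basis of L²(ℝⁿ), and suppose the space of negative dilates V_0 = closure of span{D_{A^j} T_k ψ^l : j < 0, k ∈ ℤⁿ, l = 1, …, L} satisfies T_k(V_0) ⊆ V_0 for all k ∈ ℤⁿ. Then V_0 is invariant under translations by the lattice Γ = Aℤⁿ + ℤⁿ, i.e., T_γ(V_0) ⊆ V_0 for all γ ∈ Aℤⁿ + ℤⁿ. -/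
open MeasureTheory Complex Real Set Filter Submodule
open scoped FourierTransform Matrix RealInnerProductSpace ENNReal NNReal ComplexConjugate

noncomputable section

abbrev ℝn (n : ℕ) : Type := EuclideanSpace ℝ (Fin n)
abbrev L2 (n : ℕ) := MeasureTheory.Lp ℂ 2 (volume : Measure (ℝn n))

def mdot {n : ℕ} (A : Matrix (Fin n) (Fin n) ℝ) (x : ℝn n) : ℝn n :=
  (EuclideanSpace.equiv (Fin n) ℝ).symm (A.mulVec ((EuclideanSpace.equiv (Fin n) ℝ) x))

def vecR {n : ℕ} (k : Fin n → ℤ) : ℝn n :=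
  (EuclideanSpace.equiv (Fin n) ℝ).symm (fun i => (k i : ℝ))

/-- A real matrix is expansive if all of its (complex) eigenvalues have modulus > 1. -/
def Expansive {n : ℕ} (A : Matrix (Fin n) (Fin n) ℝ) : Prop :=
  ∀ μ ∈ spectrum ℂ (A.map (Complex.ofReal)), 1 < ‖μ‖

/-- Translation operator `T_k` on `L²(ℝⁿ)`: `T_k f (x) = f (x - k)`. -/
def translateL {n : ℕ} (k : ℝn n) (f : L2 n) : L2 n :=
  MemLp.toLp (fun x => f (x - k))
    ((Lp.memLp f).comp_measurePreserving (measurePreserving_sub_right volume k))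

/-- The full rank lattice `P ℤⁿ`. -/
def latticeOf {n : ℕ} (P : Matrix (Fin n) (Fin n) ℝ) : Set (ℝn n) :=
  Set.range fun k : Fin n → ℤ => mdot P (vecR k)

/-- The standard lattice `ℤⁿ ⊆ ℝⁿ`. -/
def intLattice (n : ℕ) : Set (ℝn n) := Set.range (vecR (n := n))

/-- The lattice `Aℤⁿ + ℤⁿ`. -/
def ratLattice {n : ℕ} (A : Matrix (Fin n) (Fin n) ℝ) : Set (ℝn n) :=
  {x | ∃ a b : Fin n → ℤ, x = mdot A (vecR a) + vecR b}

/-- The dual lattice `Γ* = {k : ⟨k,γ⟩ ∈ ℤ for all γ ∈ Γ}`. -/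
def dualLattice {n : ℕ} (Γ : Set (ℝn n)) : Set (ℝn n) :=
  {k | ∀ γ ∈ Γ, ∃ m : ℤ, (inner ℝ k γ : ℝ) = (m : ℝ)}

/-- `F` is the (Plancherel / L²) Fourier transform of `f`, characterized by the
multiplication formula against Schwartz functions. -/
def IsFourierOf {n : ℕ} (f F : ℝn n → ℂ) : Prop :=
  MemLp F 2 (volume : Measure (ℝn n)) ∧
  ∀ g : SchwartzMap (ℝn n) ℂ, ∫ ξ, F ξ * g ξ = ∫ x, f x * 𝓕 (⇑g) x

/-- `d : Fin p → ℝⁿ` is a complete set of representatives of the distinct cosets of `Γ/Λ`. -/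
def IsTransversal {n : ℕ} (Γ Λ : Set (ℝn n)) {p : ℕ} (d : Fin p → ℝn n) : Prop :=
  (∀ j, d j ∈ Γ) ∧ (∀ j j', j ≠ j' → d j - d j' ∉ Λ) ∧ (∀ γ ∈ Γ, ∃ j, γ - d j ∈ Λ)

/-- `{V_j}` is an `(A,Γ)`-MRA with scaling vector `φ = (φ¹,…,φᴺ)` (multiplicity `N`). -/
structure IsMRA {n : ℕ} (A : Matrix (Fin n) (Fin n) ℝ) (Γ : Set (ℝn n)) {N : ℕ}
    (V : ℤ → Submodule ℂ (L2 n)) (φ : Fin N → L2 n) : Prop where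
  closed : ∀ j : ℤ, IsClosed (V j : Set (L2 n))
  mono : ∀ j : ℤ, V j ≤ V (j + 1)
  inter_bot : (⋂ j : ℤ, (V j : Set (L2 n))) = {0}
  union_dense : Dense (⋃ j : ℤ, (V j : Set (L2 n)))
  dilate : ∀ (j : ℤ) (f g : L2 n),
    (∀ᵐ x ∂(volume : Measure (ℝn n)), g x = f (mdot (A ^ j) x)) → (f ∈ V 0 ↔ g ∈ V j)
  orthonormal : Orthonormal ℂ (fun p : Γ × Fin N => translateL p.1.1 (φ p.2))
  span_eq : (Submodule.span ℂ
      (Set.range fun p : Γ × Fin N => translateL p.1.1 (φ p.2))).topologicalClosure = V 0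

/-- `ψ = (ψ¹,…,ψᴸ)` is an orthonormal wavelet for the dilation `A` and lattice `ℤⁿ`. -/
def IsOrthonormalWavelet {n L : ℕ} (A : Matrix (Fin n) (Fin n) ℝ)
    (ψ : Fin L → ℝn n → ℂ) : Prop :=
  ∃ W : (ℤ × (Fin n → ℤ) × Fin L) → L2 n,
    (∀ (j : ℤ) (k : Fin n → ℤ) (l : Fin L), (W (j, k, l) : ℝn n → ℂ) =ᵐ[volume]
      fun x => (|A.det| ^ ((j : ℝ) / 2) : ℝ) * ψ l (mdot (A ^ j) x - vecR k)) ∧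
    Orthonormal ℂ W ∧
    (Submodule.span ℂ (Set.range W)).topologicalClosure = ⊤

/-- A quasi-norm associated with an expansive dilation `A`. -/
def IsQuasiNorm {n : ℕ} (A : Matrix (Fin n) (Fin n) ℝ) (ρ : ℝn n → ℝ) : Prop :=
  Continuous ρ ∧ (∀ x, 0 ≤ ρ x) ∧ (∀ x, x ≠ 0 → 0 < ρ x) ∧ (∀ x, ρ (-x) = ρ x) ∧
  (∀ x, ρ (mdot A x) = |A.det| * ρ x) ∧ ∃ c : ℝ, 0 < c ∧ ∀ x y, ρ (x + y) ≤ c * (ρ x + ρ y)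


/-- A family `e` in `L²(ℝⁿ)` is a Riesz basis of the closed subspace `V`. -/
def IsRieszBasisOf {n : ℕ} {ι : Type*} (e : ι → L2 n) (V : Submodule ℂ (L2 n)) : Prop :=
  (Submodule.span ℂ (Set.range e)).topologicalClosure = V ∧
  ∃ C₁ C₂ : ℝ, 0 < C₁ ∧ 0 < C₂ ∧ ∀ c : ι →₀ ℂ,
    C₁ * ∑ i ∈ c.support, ‖c i‖ ^ 2 ≤ ‖∑ i ∈ c.support, c i • e i‖ ^ 2 ∧
    ‖∑ i ∈ c.support, c i • e i‖ ^ 2 ≤ C₂ * ∑ i ∈ c.support, ‖c i‖ ^ 2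

namespace ExtraInv

variable {n : ℕ}

/-! ### mdot algebra -/

lemma mdot_mdot (M N : Matrix (Fin n) (Fin n) ℝ) (x : ℝn n) :
    mdot M (mdot N x) = mdot (M * N) x := by
  simp [mdot, Matrix.mulVec_mulVec]
  exact Matrix.mulVec_mulVec ((EuclideanSpace.equiv (Fin n) ℝ) x) M N

lemma mdot_one (x : ℝn n) : mdot (1 : Matrix (Fin n) (Fin n) ℝ) x = x := by
  simp [mdot]

lemma mdot_sub (M : Matrix (Fin n) (Fin n) ℝ) (x y : ℝn n) :
    mdot M (x - y) = mdot M x - mdot M y := by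
  simp [mdot, Matrix.mulVec_sub]

lemma vecR_add (a b : Fin n → ℤ) : vecR (a + b) = vecR a + vecR b := by
  rw [vecR, show (fun i => ((a + b) i : ℝ)) = (fun i => (a i : ℝ)) + (fun i => (b i : ℝ)) by
    funext i; simp, map_add]
  rfl

/-! ### the linear map and measure theory of mdot -/

def mdotL (A : Matrix (Fin n) (Fin n) ℝ) : ℝn n →ₗ[ℝ] ℝn n :=
  (((EuclideanSpace.equiv (Fin n) ℝ).symm : (Fin n → ℝ) ≃L[ℝ] ℝn n) :
      (Fin n → ℝ) →ₗ[ℝ] ℝn n)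
    ∘ₗ A.mulVecLin ∘ₗ
    ((EuclideanSpace.equiv (Fin n) ℝ : ℝn n ≃L[ℝ] (Fin n → ℝ)) : ℝn n →ₗ[ℝ] (Fin n → ℝ))

lemma mdotL_apply (A : Matrix (Fin n) (Fin n) ℝ) (x : ℝn n) : mdotL A x = mdot A x := rfl

lemma det_mdotL (A : Matrix (Fin n) (Fin n) ℝ) : LinearMap.det (mdotL A) = A.det := by
  have h := LinearMap.det_conj (A.mulVecLin)
    ((EuclideanSpace.equiv (Fin n) ℝ).toLinearEquiv.symm)
  rw [show mdotL A
      = ((EuclideanSpace.equiv (Fin n) ℝ).toLinearEquiv.symm : (Fin n → ℝ) →ₗ[ℝ] ℝn n)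
        ∘ₗ A.mulVecLin ∘ₗ ((EuclideanSpace.equiv (Fin n) ℝ).toLinearEquiv.symm.symm :
          ℝn n →ₗ[ℝ] (Fin n → ℝ)) from rfl, h,
    show A.mulVecLin = Matrix.toLin' A from rfl, LinearMap.det_toLin']

lemma continuous_mdot (A : Matrix (Fin n) (Fin n) ℝ) : Continuous (mdot A) := by
  have : Continuous (mdotL A) := (mdotL A).continuous_of_finiteDimensional
  simpa [funext (mdotL_apply A)] using this

variable {B : Matrix (Fin n) (Fin n) ℝ}

lemma measurePreserving_mdot (hB : B.det ≠ 0) :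
    MeasurePreserving (mdot B) (volume : Measure (ℝn n))
      (ENNReal.ofReal |(B.det)⁻¹| • (volume : Measure (ℝn n))) := by
  refine ⟨(continuous_mdot B).measurable, ?_⟩
  have := Measure.map_linearMap_addHaar_eq_smul_addHaar (volume : Measure (ℝn n))
    (f := mdotL B) (by rw [det_mdotL]; exact hB)
  rw [det_mdotL] at this
  rw [show ⇑(mdotL B) = mdot B from funext (mdotL_apply B)] at this
  exact this

lemma qmp_mdot (hB : B.det ≠ 0) :
    Measure.QuasiMeasurePreserving (mdot B) (volume : Measure (ℝn n)) volume := by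
  refine ⟨(continuous_mdot B).measurable, ?_⟩
  rw [(measurePreserving_mdot hB).map_eq]
  exact Measure.smul_absolutelyContinuous

lemma qmp_sub (k : ℝn n) :
    Measure.QuasiMeasurePreserving (fun x : ℝn n => x - k) volume volume :=
  (measurePreserving_sub_right volume k).quasiMeasurePreserving


/-! ### dilation operator -/

def dilFun (B : Matrix (Fin n) (Fin n) ℝ) (f : ℝn n → ℂ) : ℝn n → ℂ :=
  fun x => ((|B.det| ^ ((1:ℝ)/2) : ℝ) : ℂ) * f (mdot B x)

lemma memℒp_dilFun (hB : B.det ≠ 0) {f : ℝn n → ℂ}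
    (hf : MemLp f 2 (volume : Measure (ℝn n))) :
    MemLp (dilFun B f) 2 (volume : Measure (ℝn n)) := by
  have h1 : MemLp f 2 (ENNReal.ofReal |(B.det)⁻¹| • (volume : Measure (ℝn n))) :=
    hf.smul_measure ENNReal.ofReal_ne_top
  exact (h1.comp_measurePreserving (measurePreserving_mdot hB)).const_mul _

lemma dil_const_mul (hB : B.det ≠ 0) :
    (‖((|B.det| ^ ((1:ℝ)/2) : ℝ) : ℂ)‖₊ : ℝ≥0∞) * (ENNReal.ofReal |(B.det)⁻¹|) ^ ((1:ℝ)/2) = 1 := by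
  have hpos : (0:ℝ) < |B.det| := abs_pos.2 hB
  have h1 : (‖((|B.det| ^ ((1:ℝ)/2) : ℝ) : ℂ)‖₊ : ℝ≥0∞) = ENNReal.ofReal (|B.det| ^ ((1:ℝ)/2)) := by
    rw [← enorm_eq_nnnorm, ← ofReal_norm, Complex.norm_real, Real.norm_eq_abs,
      _root_.abs_of_nonneg (Real.rpow_nonneg (abs_nonneg _) _)]
  rw [h1, abs_inv, ENNReal.ofReal_inv_of_pos hpos, ENNReal.inv_rpow,
    ENNReal.ofReal_rpow_of_pos hpos]
  exact ENNReal.mul_inv_cancel (by positivity) (by finiteness)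

lemma eLpNorm_dilFun (hB : B.det ≠ 0) {f : ℝn n → ℂ}
    (hf : AEStronglyMeasurable f (volume : Measure (ℝn n))) :
    eLpNorm (dilFun B f) 2 (volume : Measure (ℝn n)) = eLpNorm f 2 volume := by
  have hf' : AEStronglyMeasurable f (ENNReal.ofReal |(B.det)⁻¹| • (volume : Measure (ℝn n))) :=
    hf.mono_ac Measure.smul_absolutelyContinuous
  have h1 : dilFun B f = ((|B.det| ^ ((1:ℝ)/2) : ℝ) : ℂ) • (f ∘ mdot B) := by
    funext x; simp [dilFun, Function.comp]
  rw [h1, eLpNorm_const_smul,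
    eLpNorm_comp_measurePreserving hf' (measurePreserving_mdot hB),
    eLpNorm_smul_measure_of_ne_top (by norm_num : (2:ℝ≥0∞) ≠ ∞), smul_eq_mul,
    show (1 / (2:ℝ≥0∞)).toReal = (1:ℝ)/2 by norm_num, ← mul_assoc,
    enorm_eq_nnnorm, dil_const_mul hB, one_mul]

lemma dilFun_congr (hB : B.det ≠ 0) {f g : ℝn n → ℂ} (h : f =ᵐ[volume] g) :
    dilFun B f =ᵐ[(volume : Measure (ℝn n))] dilFun B g := by
  filter_upwards [(qmp_mdot hB).ae_eq_comp h] with x hx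
  simp only [Function.comp] at hx
  simp [dilFun, hx]

lemma tr_congr (k : ℝn n) {f g : ℝn n → ℂ} (h : f =ᵐ[volume] g) :
    (fun x => f (x - k)) =ᵐ[(volume : Measure (ℝn n))] (fun x => g (x - k)) :=
  (qmp_sub k).ae_eq_comp h

def dilCLM (hB : B.det ≠ 0) : L2 n →L[ℂ] L2 n :=
  LinearMap.mkContinuous
    { toFun := fun f => (memℒp_dilFun hB (Lp.memLp f)).toLp (dilFun B ⇑f)
      map_add' := by
        intro f g
        apply Lp.ext
        apply ((MemLp.coeFn_toLp _).trans _).trans (Lp.coeFn_add _ _).symm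
        refine (dilFun_congr hB (Lp.coeFn_add f g)).trans ?_
        refine EventuallyEq.trans (EventuallyEq.of_eq ?_)
          (((MemLp.coeFn_toLp _).symm.add (MemLp.coeFn_toLp _).symm))
        funext x; simp [dilFun]; ring
      map_smul' := by
        intro c f
        apply Lp.ext
        refine ((MemLp.coeFn_toLp (memℒp_dilFun hB (Lp.memLp (c • f)))).trans ?_).trans
          (Lp.coeFn_smul _ _).symm
        refine (dilFun_congr hB (Lp.coeFn_smul c f)).trans ?_
        refine EventuallyEq.trans (EventuallyEq.of_eq ?_)
          ((MemLp.coeFn_toLp (memℒp_dilFun hB (Lp.memLp f))).symm.const_smul c)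
        funext x; simp [dilFun]; ring }
    1
    (by
      intro f
      have h := Lp.norm_toLp (μ := (volume : Measure (ℝn n))) (p := 2) (dilFun B ⇑f)
        (memℒp_dilFun hB (Lp.memLp f))
      simp only [LinearMap.coe_mk, AddHom.coe_mk, one_mul]
      rw [h, eLpNorm_dilFun hB (Lp.aestronglyMeasurable f), Lp.norm_def])

lemma dilCLM_coeFn (hB : B.det ≠ 0) (f : L2 n) :
    ⇑(dilCLM hB f) =ᵐ[(volume : Measure (ℝn n))] dilFun B ⇑f :=
  MemLp.coeFn_toLp (memℒp_dilFun hB (Lp.memLp f))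


/-! ### translation operator as CLM -/

lemma translateL_coeFn (k : ℝn n) (f : L2 n) :
    ⇑(translateL k f) =ᵐ[(volume : Measure (ℝn n))] fun x => f (x - k) :=
  MemLp.coeFn_toLp ((Lp.memLp f).comp_measurePreserving (measurePreserving_sub_right volume k))

def trCLM (k : ℝn n) : L2 n →L[ℂ] L2 n :=
  LinearMap.mkContinuous
    { toFun := translateL k
      map_add' := by
        intro f g
        apply Lp.ext
        refine ((translateL_coeFn k (f + g)).trans ?_).trans (Lp.coeFn_add _ _).symm
        refine (tr_congr k (Lp.coeFn_add f g)).trans ?_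
        exact ((translateL_coeFn k f).symm.add (translateL_coeFn k g).symm)
      map_smul' := by
        intro c f
        apply Lp.ext
        refine ((translateL_coeFn k (c • f)).trans ?_).trans (Lp.coeFn_smul _ _).symm
        refine (tr_congr k (Lp.coeFn_smul c f)).trans ?_
        exact ((translateL_coeFn k f).symm.const_smul c) }
    1
    (by
      intro f
      have h := Lp.norm_toLp (μ := (volume : Measure (ℝn n))) (p := 2) (fun x => f (x - k))
        ((Lp.memLp f).comp_measurePreserving (measurePreserving_sub_right volume k))
      simp only [LinearMap.coe_mk, AddHom.coe_mk, one_mul]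
      show ‖translateL k f‖ ≤ ‖f‖
      rw [translateL, h,
        show (fun x : ℝn n => f (x - k)) = (⇑f) ∘ (fun x : ℝn n => x - k) from rfl,
        eLpNorm_comp_measurePreserving (Lp.aestronglyMeasurable f)
          (measurePreserving_sub_right volume k), Lp.norm_def])

lemma trCLM_apply (k : ℝn n) (f : L2 n) : trCLM k f = translateL k f := rfl

lemma tr_tr (x y : ℝn n) (f : L2 n) :
    translateL x (translateL y f) = translateL (x + y) f := by
  apply Lp.ext
  refine ((translateL_coeFn x (translateL y f)).trans ?_).trans (translateL_coeFn (x + y) f).symm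
  refine (tr_congr x (translateL_coeFn y f)).trans ?_
  apply EventuallyEq.of_eq; funext z; rw [sub_sub]

/-! ### closure mapping lemma -/

lemma mem_of_span_closure {φ : L2 n →L[ℂ] L2 n} {S : Set (L2 n)} {V : Submodule ℂ (L2 n)}
    (hVc : IsClosed (V : Set (L2 n))) (hS : ∀ s ∈ S, φ s ∈ V) :
    ∀ f ∈ (Submodule.span ℂ S).topologicalClosure, φ f ∈ V := by
  intro f hf
  have hle : (Submodule.span ℂ S).topologicalClosure ≤ V.comap (φ : L2 n →ₗ[ℂ] L2 n) := by
    apply Submodule.topologicalClosure_minimal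
    · exact Submodule.span_le.2 hS
    · exact hVc.preimage φ.continuous
  exact hle hf

/-! ### action on wavelet system -/

section W

variable {L : ℕ} {A : Matrix (Fin n) (Fin n) ℝ} {ψ : Fin L → ℝn n → ℂ}
  {W : ℤ × (Fin n → ℤ) × Fin L → L2 n}

lemma dil_W (hA : A.det ≠ 0)
    (hW : ∀ (j : ℤ) (k : Fin n → ℤ) (l : Fin L), (W (j, k, l) : ℝn n → ℂ) =ᵐ[volume]
      fun x => ((|A.det| ^ ((j : ℝ) / 2) : ℝ) : ℂ) * ψ l (mdot (A ^ j) x - vecR k))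
    (j : ℤ) (k : Fin n → ℤ) (l : Fin L) :
    dilCLM hA (W (j, k, l)) = W (j + 1, k, l) := by
  apply Lp.ext
  refine ((dilCLM_coeFn hA _).trans
    ((dilFun_congr hA (hW j k l)).trans ?_)).trans (hW (j+1) k l).symm
  apply EventuallyEq.of_eq; funext x
  simp only [dilFun]
  rw [mdot_mdot, ← Matrix.zpow_add_one (isUnit_iff_ne_zero.2 hA) j,
    show (((j+1:ℤ)):ℝ)/2 = (1:ℝ)/2 + (j:ℝ)/2 by push_cast; ring,
    Real.rpow_add (abs_pos.2 hA)]
  push_cast; ring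

lemma dil_W_inv (hA : A.det ≠ 0) (hA' : (A⁻¹).det ≠ 0)
    (hW : ∀ (j : ℤ) (k : Fin n → ℤ) (l : Fin L), (W (j, k, l) : ℝn n → ℂ) =ᵐ[volume]
      fun x => ((|A.det| ^ ((j : ℝ) / 2) : ℝ) : ℂ) * ψ l (mdot (A ^ j) x - vecR k))
    (j : ℤ) (k : Fin n → ℤ) (l : Fin L) :
    dilCLM hA' (W (j, k, l)) = W (j - 1, k, l) := by
  have hdetinv : (A⁻¹).det = (A.det)⁻¹ := by
    rw [Matrix.det_nonsing_inv, Ring.inverse_eq_inv']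
  have hpos : (0:ℝ) < |A.det| := abs_pos.2 hA
  apply Lp.ext
  refine ((dilCLM_coeFn hA' _).trans
    ((dilFun_congr hA' (hW j k l)).trans ?_)).trans (hW (j-1) k l).symm
  apply EventuallyEq.of_eq; funext x
  simp only [dilFun]
  rw [mdot_mdot, ← Matrix.zpow_sub_one (isUnit_iff_ne_zero.2 hA) j,
    hdetinv, abs_inv, Real.inv_rpow (abs_nonneg _), ← Real.rpow_neg (le_of_lt hpos),
    show (((j-1:ℤ)):ℝ)/2 = -((1:ℝ)/2) + (j:ℝ)/2 by push_cast; ring,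
    Real.rpow_add hpos]
  push_cast; ring

lemma tr_W0 (hA : A.det ≠ 0)
    (hW : ∀ (j : ℤ) (k : Fin n → ℤ) (l : Fin L), (W (j, k, l) : ℝn n → ℂ) =ᵐ[volume]
      fun x => ((|A.det| ^ ((j : ℝ) / 2) : ℝ) : ℂ) * ψ l (mdot (A ^ j) x - vecR k))
    (a k : Fin n → ℤ) (l : Fin L) :
    translateL (vecR a) (W (0, k, l)) = W (0, a + k, l) := by
  apply Lp.ext
  refine ((translateL_coeFn (vecR a) _).trans
    ((tr_congr (vecR a) (hW 0 k l)).trans ?_)).trans (hW 0 (a + k) l).symm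
  apply EventuallyEq.of_eq; funext x
  rw [zpow_zero, mdot_one, mdot_one, vecR_add, sub_sub]

lemma dil_tr (hA : A.det ≠ 0) (v : ℝn n) (f : L2 n) :
    dilCLM hA (translateL (mdot A v) f) = translateL v (dilCLM hA f) := by
  apply Lp.ext
  refine (((dilCLM_coeFn hA _).trans
      (dilFun_congr hA (translateL_coeFn (mdot A v) f))).trans ?_).trans
    ((translateL_coeFn v _).trans (tr_congr v (dilCLM_coeFn hA f))).symm
  apply EventuallyEq.of_eq; funext x
  simp only [dilFun]
  rw [mdot_sub]

lemma dil_inv_dil (hA : A.det ≠ 0) (hA' : (A⁻¹).det ≠ 0) (f : L2 n) :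
    dilCLM hA' (dilCLM hA f) = f := by
  have hdetinv : (A⁻¹).det = (A.det)⁻¹ := by
    rw [Matrix.det_nonsing_inv, Ring.inverse_eq_inv']
  have hpos : (0:ℝ) < |A.det| := abs_pos.2 hA
  apply Lp.ext
  refine (dilCLM_coeFn hA' _).trans ((dilFun_congr hA' (dilCLM_coeFn hA f)).trans ?_)
  apply EventuallyEq.of_eq; funext x
  simp only [dilFun]
  rw [mdot_mdot, Matrix.mul_nonsing_inv A (isUnit_iff_ne_zero.2 hA), mdot_one, hdetinv, abs_inv, ← mul_assoc,
    ← Complex.ofReal_mul, ← Real.mul_rpow (inv_nonneg.2 (le_of_lt hpos)) (abs_nonneg _),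
    inv_mul_cancel₀ (ne_of_gt hpos), Real.one_rpow, Complex.ofReal_one, one_mul]

end W

end ExtraInv

/-- **Extra shift invariance of the space of negative dilates** (Lemma 7.10).
Let `A` be expansive and let `Ψ = {ψ¹,…,ψᴸ}` generate a Riesz wavelet basis of `L²(ℝⁿ)`.
If the space of negative dilates `V₀` is invariant under integer translations, then it is
invariant under translations by the lattice `Γ = Aℤⁿ + ℤⁿ`. -/
theorem negative_dilates_extra_invariance (n L : ℕ)
    (A : Matrix (Fin n) (Fin n) ℝ) (hA : Expansive A)
    (ψ : Fin L → ℝn n → ℂ)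
    -- `W (j,k,l)` is the wavelet system member `D_{A^j} T_k ψˡ` :
    (W : ℤ × (Fin n → ℤ) × Fin L → L2 n)
    (hW : ∀ (j : ℤ) (k : Fin n → ℤ) (l : Fin L), (W (j, k, l) : ℝn n → ℂ) =ᵐ[volume]
      fun x => ((|A.det| ^ ((j : ℝ) / 2) : ℝ) : ℂ) * ψ l (mdot (A ^ j) x - vecR k))
    -- the wavelet system is a Riesz basis of `L²(ℝⁿ)` :
    (hRiesz : IsRieszBasisOf W (⊤ : Submodule ℂ (L2 n)))
    -- the space of negative dilates :
    (V0 : Submodule ℂ (L2 n))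
    (hV0 : V0 = (Submodule.span ℂ
      {g : L2 n | ∃ (j : ℤ) (k : Fin n → ℤ) (l : Fin L), j < 0 ∧ g = W (j, k, l)}
      ).topologicalClosure)
    -- `V₀` is invariant under integer translations :
    (hSI : ∀ k : Fin n → ℤ, ∀ f ∈ V0, translateL (vecR k) f ∈ V0) :
    ∀ γ ∈ ratLattice A, ∀ f ∈ V0, translateL γ f ∈ V0 := by
  classical
  have hdet : A.det ≠ 0 := by
    intro h0
    have hz : (0:ℂ) ∈ spectrum ℂ (A.map Complex.ofReal) := by
      rw [spectrum.zero_mem_iff]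
      intro hu
      have hd := (Matrix.isUnit_iff_isUnit_det _).1 hu
      have hd' : (A.map Complex.ofReal).det = (A.det : ℂ) := by
        have h := (Complex.ofRealHom.map_det A).symm
        simp at h
        exact h
      rw [hd', h0] at hd
      simp at hd
    have := hA 0 hz
    simp at this
    exact absurd this (by norm_num)
  have hdu : IsUnit A.det := isUnit_iff_ne_zero.2 hdet
  have hdet' : (A⁻¹).det ≠ 0 := by
    rw [Matrix.det_nonsing_inv, Ring.inverse_eq_inv']
    exact inv_ne_zero hdet
  set V1 : Submodule ℂ (L2 n) := (Submodule.span ℂ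
    {g : L2 n | ∃ (j : ℤ) (k : Fin n → ℤ) (l : Fin L), j < 1 ∧ g = W (j, k, l)}
    ).topologicalClosure with hV1
  have hV1closed : IsClosed (V1 : Set (L2 n)) := Submodule.isClosed_topologicalClosure _
  have hV0closed : IsClosed (V0 : Set (L2 n)) := by
    rw [hV0]; exact Submodule.isClosed_topologicalClosure _
  have hS1V1 : ∀ s ∈ {g : L2 n | ∃ (j : ℤ) (k : Fin n → ℤ) (l : Fin L), j < 1 ∧ g = W (j, k, l)},
      s ∈ V1 := fun s hs => Submodule.le_topologicalClosure _ (Submodule.subset_span hs)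
  have hV0le : V0 ≤ V1 := by
    rw [hV0, hV1]
    refine Submodule.topologicalClosure_mono (Submodule.span_mono ?_)
    rintro s ⟨j, k, l, hj, rfl⟩
    exact ⟨j, k, l, by omega, rfl⟩
  have hDmaps : ∀ g ∈ V0, ExtraInv.dilCLM hdet g ∈ V1 := by
    intro g hg
    rw [hV0] at hg
    refine ExtraInv.mem_of_span_closure hV1closed ?_ g hg
    rintro s ⟨j, k, l, hj, rfl⟩
    rw [ExtraInv.dil_W hdet hW j k l]
    exact hS1V1 _ ⟨j+1, k, l, by omega, rfl⟩
  have hD'maps : ∀ g ∈ V1, ExtraInv.dilCLM hdet' g ∈ V0 := by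
    intro g hg
    refine ExtraInv.mem_of_span_closure hV0closed ?_ g hg
    rintro s ⟨j, k, l, hj, rfl⟩
    rw [ExtraInv.dil_W_inv hdet hdet' hW j k l, hV0]
    exact Submodule.le_topologicalClosure _ (Submodule.subset_span ⟨j-1, k, l, by omega, rfl⟩)
  have hTmaps : ∀ (a : Fin n → ℤ), ∀ g ∈ V1, ExtraInv.trCLM (vecR a) g ∈ V1 := by
    intro a g hg
    refine ExtraInv.mem_of_span_closure hV1closed ?_ g hg
    rintro s ⟨j, k, l, hj, rfl⟩
    rcases lt_or_ge j 0 with hj0 | hj0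
    · have hsV0 : W (j, k, l) ∈ V0 := by
        rw [hV0]
        exact Submodule.le_topologicalClosure _ (Submodule.subset_span ⟨j, k, l, hj0, rfl⟩)
      rw [ExtraInv.trCLM_apply]
      exact hV0le (hSI a _ hsV0)
    · have hj0' : j = 0 := by omega
      subst hj0'
      rw [ExtraInv.trCLM_apply, ExtraInv.tr_W0 hdet hW a k l]
      exact hS1V1 _ ⟨0, a + k, l, by omega, rfl⟩
  intro γ hγ f hf
  obtain ⟨a, b, rfl⟩ := hγ
  have key : translateL (mdot A (vecR a)) f ∈ V0 := by
    have h1 : ExtraInv.dilCLM hdet (translateL (mdot A (vecR a)) f)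
        = ExtraInv.trCLM (vecR a) (ExtraInv.dilCLM hdet f) :=
      ExtraInv.dil_tr hdet (vecR a) f
    have h2 : ExtraInv.dilCLM hdet' (ExtraInv.dilCLM hdet (translateL (mdot A (vecR a)) f))
        = translateL (mdot A (vecR a)) f := ExtraInv.dil_inv_dil hdet hdet' _
    rw [← h2, h1]
    exact hD'maps _ (hTmaps a _ (hDmaps f hf))
  rw [show mdot A (vecR a) + vecR b = vecR b + mdot A (vecR a) from add_comm _ _,
    ← ExtraInv.tr_tr (vecR b) (mdot A (vecR a)) f]
  exact hSI b _ key


end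
end
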